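/- (Lemma 2, part 1) For every l ≥ 0 and every query index j ∈ {1,…,n}, the bottom-right entry y_l^q of the embedding Z_l evolved from Z_0(j) under the TD parameters satisfies |y_l^q| ≤ (1 + γ^l) ‖v‖_∞; equivalently, ‖w_l‖_∞ ≤ (1 + γ^l) ‖v‖_∞. -/

import Mathlib

open Matrix Filter Topology

noncomputable section

/-- Index type for `2n` rows (two stacked copies of the feature dimension). -/
abbrev TwoN (n : ℕ) := Fin n ⊕ Fin n
/-- Row index type for prompts: `2n + 1`. -/
abbrev RIdx (n : ℕ) := TwoN n ⊕ Unit
/-- Column index type for prompts: `n + 1` (context columns plus the query column). -/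
abbrev CIdx (n : ℕ) := Fin n ⊕ Unit

/-- The mask `M = [[I_n, 0],[0, 0]]`. -/
def maskM (n : ℕ) : Matrix (CIdx n) (CIdx n) ℝ := Matrix.fromBlocks 1 0 0 0

/-- One linear attention layer `Z ↦ Z + P̃ Z M (Zᵀ Q̃ Z)`. -/
def attnLayer (n : ℕ) (Pm Qm : Matrix (RIdx n) (RIdx n) ℝ)
    (Z : Matrix (RIdx n) (CIdx n) ℝ) : Matrix (RIdx n) (CIdx n) ℝ :=
  Z + Pm * Z * maskM n * (Zᵀ * Qm * Z)

/-- `P̃ = [[0, 0],[u, 1]]`. -/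
def Pmat (n : ℕ) (u : Matrix Unit (TwoN n) ℝ) : Matrix (RIdx n) (RIdx n) ℝ :=
  Matrix.fromBlocks 0 0 u 1

/-- `Q̃ = [[A, 0],[0, 0]]`. -/
def Qmat (n : ℕ) (A : Matrix (TwoN n) (TwoN n) ℝ) : Matrix (RIdx n) (RIdx n) ℝ :=
  Matrix.fromBlocks A 0 0 0

/-- `A^TD = [[-I, I],[0, 0]]`. -/
def Atd (n : ℕ) : Matrix (TwoN n) (TwoN n) ℝ := Matrix.fromBlocks (-1) 1 0 0

/-- A row-stochastic matrix. -/
def RowStochastic {n : ℕ} (P : Matrix (Fin n) (Fin n) ℝ) : Prop :=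
  (∀ i k, 0 ≤ P i k) ∧ ∀ i, ∑ k, P i k = 1

/-- TD iterates `w_0 = 0`, `w_{l+1} = r + γ P w_l`. -/
def tdW {n : ℕ} (γ : ℝ) (P : Matrix (Fin n) (Fin n) ℝ) (r : Fin n → ℝ) : ℕ → Fin n → ℝ
  | 0 => 0
  | l + 1 => r + γ • P.mulVec (tdW γ P r l)

/-- The value vector `v = (I - γ P)⁻¹ r`. -/
def valueV {n : ℕ} (γ : ℝ) (P : Matrix (Fin n) (Fin n) ℝ) (r : Fin n → ℝ) : Fin n → ℝ :=
  ((1 : Matrix (Fin n) (Fin n) ℝ) - γ • P)⁻¹.mulVec r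

/-- The prompt `Z_0(j)`: the `i`-th column is `(e_i, γ Pᵀ e_i, r_i)` and the query
column is `(e_j, 0, 0)`. -/
def prompt {n : ℕ} (γ : ℝ) (P : Matrix (Fin n) (Fin n) ℝ) (r : Fin n → ℝ) (j : Fin n) :
    Matrix (RIdx n) (CIdx n) ℝ := fun p q =>
  match p, q with
  | Sum.inl (Sum.inl k), Sum.inl i => if k = i then 1 else 0
  | Sum.inl (Sum.inr k), Sum.inl i => γ * P i k
  | Sum.inr _, Sum.inl i => r i
  | Sum.inl (Sum.inl k), Sum.inr _ => if k = j then 1 else 0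
  | Sum.inl (Sum.inr _), Sum.inr _ => 0
  | Sum.inr _, Sum.inr _ => 0

/-- Embeddings `Z_l` of the looped transformer with shared parameters `(A, u)`,
starting from the prompt `Z_0(j)`. -/
def embed {n : ℕ} (γ : ℝ) (P : Matrix (Fin n) (Fin n) ℝ) (r : Fin n → ℝ) (j : Fin n)
    (A : Matrix (TwoN n) (TwoN n) ℝ) (u : Matrix Unit (TwoN n) ℝ) :
    ℕ → Matrix (RIdx n) (CIdx n) ℝ
  | 0 => prompt γ P r j
  | l + 1 => attnLayer n (Pmat n u) (Qmat n A) (embed γ P r j A u l)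

/-- Looped `L`-layer transformer output `F_L^{(j)}(A, u) = -(Z_L)_{2n+1, n+1}`. -/
def tfOut {n : ℕ} (γ : ℝ) (P : Matrix (Fin n) (Fin n) ℝ) (r : Fin n → ℝ) (j : Fin n)
    (A : Matrix (TwoN n) (TwoN n) ℝ) (u : Matrix Unit (TwoN n) ℝ) (L : ℕ) : ℝ :=
  -(embed γ P r j A u L (Sum.inr ()) (Sum.inr ()))

/-- `TF_L(Z_0(j); θ_L^TD)`: the transformer output with the TD parameters. -/
def tfTD {n : ℕ} (γ : ℝ) (P : Matrix (Fin n) (Fin n) ℝ) (r : Fin n → ℝ) (j : Fin n) (L : ℕ) : ℝ :=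
  tfOut γ P r j (Atd n) 0 L

/-- `X ∈ ℝ^{2n×n}`: the `i`-th column is `(e_i, γ Pᵀ e_i)`. -/
def Xmat {n : ℕ} (γ : ℝ) (P : Matrix (Fin n) (Fin n) ℝ) : Matrix (TwoN n) (Fin n) ℝ :=
  fun p i => match p with
  | Sum.inl k => if k = i then 1 else 0
  | Sum.inr k => γ * P i k

/-- The query vector `x^q = (e_ω, 0) ∈ ℝ^{2n}`. -/
def xqv {n : ℕ} (ω : Fin n) : TwoN n → ℝ := fun p =>
  match p with
  | Sum.inl k => if k = ω then 1 else 0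
  | Sum.inr _ => 0

/-- Operator norm induced by the ℓ1 vector norm: maximum absolute column sum. -/
def matL1 {m k : Type*} [Fintype m] [Fintype k] (B : Matrix m k ℝ) : ℝ :=
  ⨆ j, ∑ i, |B i j|

/-- `G_0^{(i)} = 0`, `G_{l+1}^{(i)} = X (r - w_l) (X e_i)ᵀ + γ Σ_j P_{ij} G_l^{(j)}`. -/
def Gseq {n : ℕ} (γ : ℝ) (P : Matrix (Fin n) (Fin n) ℝ) (r : Fin n → ℝ) :
    ℕ → Fin n → Matrix (TwoN n) (TwoN n) ℝ
  | 0 => fun _ => 0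
  | l + 1 => fun i =>
      Matrix.vecMulVec ((Xmat γ P).mulVec (r - tdW γ P r l)) ((Xmat γ P).mulVec (Pi.single i 1))
        + γ • ∑ j, P i j • Gseq γ P r l j

/-- `H_0 = 0`, `H_{l+1} = H_l + X (r - w_l) (x^q)ᵀ - G_l^{(ω)}`. -/
def Hseq {n : ℕ} (γ : ℝ) (P : Matrix (Fin n) (Fin n) ℝ) (r : Fin n → ℝ) (ω : Fin n) :
    ℕ → Matrix (TwoN n) (TwoN n) ℝ
  | 0 => 0
  | l + 1 => Hseq γ P r ω l
      + Matrix.vecMulVec ((Xmat γ P).mulVec (r - tdW γ P r l)) (xqv ω)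
      - Gseq γ P r l ω

/-- `U_0 = 0`, `U_{l+1} = X Xᵀ A^TD X + γ U_l Pᵀ`. -/
def Useq {n : ℕ} (γ : ℝ) (P : Matrix (Fin n) (Fin n) ℝ) : ℕ → Matrix (TwoN n) (Fin n) ℝ
  | 0 => 0
  | l + 1 => Xmat γ P * (Xmat γ P)ᵀ * Atd n * Xmat γ P + γ • (Useq γ P l * Pᵀ)

/-- `h_0 = 0`, `h_{l+1} = h_l + X Xᵀ A^TD x^q + U_l Xᵀ A^TD x^q`. -/
def hseq {n : ℕ} (γ : ℝ) (P : Matrix (Fin n) (Fin n) ℝ) (ω : Fin n) : ℕ → TwoN n → ℝ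
  | 0 => 0
  | l + 1 => hseq γ P ω l
      + (Xmat γ P * (Xmat γ P)ᵀ * Atd n).mulVec (xqv ω)
      + (Useq γ P l * (Xmat γ P)ᵀ * Atd n).mulVec (xqv ω)

/-- `g_L(j)`: the vector of all partial derivatives of `F_L^{(j)}` with respect to the
entries of `A` and of `u`, evaluated at the TD parameters `(A^TD, 0)`. -/
def gvec {n : ℕ} (γ : ℝ) (P : Matrix (Fin n) (Fin n) ℝ) (r : Fin n → ℝ) (L : ℕ) (j : Fin n) :
    (TwoN n × TwoN n) ⊕ TwoN n → ℝ
  | Sum.inl ab => deriv (fun t : ℝ =>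
      tfOut γ P r j (Atd n + t • Matrix.single ab.1 ab.2 1) 0 L) 0
  | Sum.inr k => deriv (fun t : ℝ =>
      tfOut γ P r j (Atd n) (t • Matrix.single () k 1) L) 0


section auxlem
variable {n : ℕ} {γ : ℝ} {P : Matrix (Fin n) (Fin n) ℝ} {r : Fin n → ℝ}

lemma tdW_succ' (l : ℕ) :
    tdW γ P r (l + 1) = tdW γ P r l + ((γ • P) ^ l).mulVec r := by
  induction l with
  | zero => simp [tdW]
  | succ l ih =>
      show r + γ • P.mulVec (tdW γ P r (l + 1))
          = (r + γ • P.mulVec (tdW γ P r l)) + ((γ • P) ^ (l + 1)).mulVec r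
      rw [ih, pow_succ', ← Matrix.mulVec_mulVec, Matrix.mulVec_add, smul_add,
        Matrix.smul_mulVec]
      abel

lemma attn_block (A : Matrix (TwoN n) (TwoN n) ℝ) (X : Matrix (TwoN n) (Fin n) ℝ)
    (xq : Matrix (TwoN n) Unit ℝ) (Y : Matrix Unit (Fin n) ℝ) (yb : Matrix Unit Unit ℝ) :
    attnLayer n (Pmat n 0) (Qmat n A) (Matrix.fromBlocks X xq Y yb) =
    Matrix.fromBlocks X xq (Y + Y * (Xᵀ * A * X)) (yb + Y * (Xᵀ * A * xq)) := by
  unfold attnLayer Pmat Qmat maskM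
  rw [Matrix.fromBlocks_transpose]
  simp [Matrix.fromBlocks_multiply, Matrix.fromBlocks_add, Matrix.mul_assoc]

lemma embed_td (j : Fin n) (l : ℕ) :
    embed γ P r j (Atd n) 0 l =
      Matrix.fromBlocks (Xmat γ P) (Matrix.of fun k (_ : Unit) => xqv j k)
        (Matrix.of fun (_ : Unit) i => ((γ • P) ^ l).mulVec r i)
        (Matrix.of fun (_ : Unit) (_ : Unit) => -(tdW γ P r l j)) := by
  induction l with
  | zero =>
      ext p q
      rcases p with (k | k) | u <;> rcases q with i | u' <;>
        simp [embed, prompt, Xmat, xqv, Matrix.fromBlocks, tdW]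
  | succ l ih =>
      show attnLayer n (Pmat n 0) (Qmat n (Atd n)) (embed γ P r j (Atd n) 0 l) = _
      rw [ih, attn_block]
      have hXAX : (Xmat γ P)ᵀ * Atd n * Xmat γ P = -1 + γ • Pᵀ := by
        ext a b
        simp [Matrix.mul_apply, Atd, Xmat, Matrix.fromBlocks, Fintype.sum_sum_type,
          Matrix.one_apply, Finset.sum_ite_eq, Finset.sum_ite_eq', eq_comm]
      have hXAxq : (Xmat γ P)ᵀ * Atd n * (Matrix.of fun k (_ : Unit) => xqv j k)
          = Matrix.of fun i (_ : Unit) => -(if i = j then (1:ℝ) else 0) := by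
        ext a b
        simp [Matrix.mul_apply, Atd, Xmat, xqv, Matrix.fromBlocks, Fintype.sum_sum_type,
          Matrix.one_apply, Finset.sum_ite_eq, Finset.sum_ite_eq', eq_comm]
      rw [hXAX, hXAxq]
      have hC : (Matrix.of fun (_ : Unit) i => ((γ • P) ^ l).mulVec r i)
            + (Matrix.of fun (_ : Unit) i => ((γ • P) ^ l).mulVec r i) * (-1 + γ • Pᵀ)
          = (Matrix.of fun (_ : Unit) i => ((γ • P) ^ (l + 1)).mulVec r i) := by
        ext u i
        simp only [Matrix.add_apply, Matrix.mul_apply, Matrix.of_apply, Matrix.neg_apply,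
          Matrix.one_apply, Matrix.smul_apply, Matrix.transpose_apply, smul_eq_mul]
        rw [pow_succ', ← Matrix.mulVec_mulVec]
        simp only [Matrix.mulVec, dotProduct, Matrix.smul_apply, smul_eq_mul,
          mul_add, mul_neg, mul_ite, mul_one, mul_zero, Finset.sum_add_distrib,
          Finset.sum_neg_distrib, Finset.sum_ite_eq']
        simp [mul_comm, mul_left_comm]
      have hD : (Matrix.of fun (_ : Unit) (_ : Unit) => -(tdW γ P r l j))
            + (Matrix.of fun (_ : Unit) i => ((γ • P) ^ l).mulVec r i)
              * (Matrix.of fun i (_ : Unit) => -(if i = j then (1:ℝ) else 0))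
          = (Matrix.of fun (_ : Unit) (_ : Unit) => -(tdW γ P r (l + 1) j)) := by
        ext u u'
        simp only [Matrix.add_apply, Matrix.mul_apply, Matrix.of_apply]
        rw [tdW_succ']
        simp only [Pi.add_apply, mul_neg, mul_ite, mul_one, mul_zero,
          Finset.sum_neg_distrib, Finset.sum_ite_eq', Finset.mem_univ, if_true]
        ring
      rw [hC, hD]

lemma stoch_mulVec_norm (hP : RowStochastic P) (x : Fin n → ℝ) :
    ‖P.mulVec x‖ ≤ ‖x‖ := by
  rw [pi_norm_le_iff_of_nonneg (norm_nonneg x)]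
  intro i
  rw [Real.norm_eq_abs, Matrix.mulVec, dotProduct]
  calc |∑ k, P i k * x k| ≤ ∑ k, |P i k * x k| := Finset.abs_sum_le_sum_abs _ _
    _ ≤ ∑ k, P i k * ‖x‖ := by
        refine Finset.sum_le_sum fun k _ => ?_
        rw [abs_mul, abs_of_nonneg (hP.1 i k)]
        exact mul_le_mul_of_nonneg_left (norm_le_pi_norm x k) (hP.1 i k)
    _ = ‖x‖ := by rw [← Finset.sum_mul, hP.2 i, one_mul]

lemma pow_mulVec_norm (hP : RowStochastic P) (hγ0 : 0 ≤ γ) (x : Fin n → ℝ) (l : ℕ) :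
    ‖((γ • P) ^ l).mulVec x‖ ≤ γ ^ l * ‖x‖ := by
  induction l with
  | zero => simp
  | succ l ih =>
      rw [pow_succ', ← Matrix.mulVec_mulVec, Matrix.smul_mulVec, norm_smul,
        Real.norm_eq_abs, abs_of_nonneg hγ0]
      calc γ * ‖P.mulVec (((γ • P) ^ l).mulVec x)‖
          ≤ γ * ‖((γ • P) ^ l).mulVec x‖ :=
            mul_le_mul_of_nonneg_left (stoch_mulVec_norm hP _) hγ0
        _ ≤ γ * (γ ^ l * ‖x‖) := mul_le_mul_of_nonneg_left ih hγ0
        _ = γ ^ (l + 1) * ‖x‖ := by ring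

end auxlem

/-- Lemma 2, part 1: bound on the bottom-right entry `y_l^q` of the
embedding evolved under the TD parameters; equivalently `‖w_l‖_∞ ≤ (1 + γ^l) ‖v‖_∞`. -/
theorem stmt6 (n : ℕ) (hn : 1 ≤ n) (γ : ℝ) (hγ0 : 0 ≤ γ) (hγ1 : γ < 1)
    (P : Matrix (Fin n) (Fin n) ℝ) (hP : RowStochastic P) (r : Fin n → ℝ)
    (l : ℕ) (j : Fin n) :
    |embed γ P r j (Atd n) 0 l (Sum.inr ()) (Sum.inr ())| ≤ (1 + γ ^ l) * ‖valueV γ P r‖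
    ∧ ‖tdW γ P r l‖ ≤ (1 + γ ^ l) * ‖valueV γ P r‖ := by
  have hdet : IsUnit ((1 : Matrix (Fin n) (Fin n) ℝ) - γ • P).det := by
    rw [isUnit_iff_ne_zero]
    intro h
    obtain ⟨x, hx0, hx⟩ := Matrix.exists_mulVec_eq_zero_iff.2 h
    rw [Matrix.sub_mulVec, Matrix.one_mulVec, sub_eq_zero] at hx
    have h1 : ‖x‖ ≤ γ * ‖x‖ := by
      calc ‖x‖ = ‖(γ • P).mulVec x‖ := by rw [← hx]
        _ = γ * ‖P.mulVec x‖ := by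
            rw [Matrix.smul_mulVec, norm_smul, Real.norm_eq_abs, abs_of_nonneg hγ0]
        _ ≤ γ * ‖x‖ := mul_le_mul_of_nonneg_left (stoch_mulVec_norm hP x) hγ0
    have h2 : 0 < ‖x‖ := norm_pos_iff.2 hx0
    nlinarith
  set v := valueV γ P r with hvdef
  have hfix : v - (γ • P).mulVec v = r := by
    have : ((1 : Matrix (Fin n) (Fin n) ℝ) - γ • P).mulVec v = r := by
      rw [hvdef, valueV, Matrix.mulVec_mulVec, Matrix.mul_nonsing_inv _ hdet,
        Matrix.one_mulVec]
    rwa [Matrix.sub_mulVec, Matrix.one_mulVec] at this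
  have hdiff : ∀ m : ℕ, v - tdW γ P r m = ((γ • P) ^ m).mulVec v := by
    intro m
    induction m with
    | zero => simp [tdW]
    | succ m ih =>
        have hfix' : v - r = (γ • P).mulVec v := by rw [← hfix]; abel
        show v - (r + γ • P.mulVec (tdW γ P r m)) = _
        calc v - (r + γ • P.mulVec (tdW γ P r m))
            = (v - r) - (γ • P).mulVec (tdW γ P r m) := by
              rw [Matrix.smul_mulVec]; abel
          _ = (γ • P).mulVec v - (γ • P).mulVec (tdW γ P r m) := by rw [hfix']
          _ = (γ • P).mulVec (v - tdW γ P r m) := (Matrix.mulVec_sub _ _ _).symm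
          _ = (γ • P).mulVec (((γ • P) ^ m).mulVec v) := by rw [ih]
          _ = ((γ • P) ^ (m + 1)).mulVec v := by rw [Matrix.mulVec_mulVec, ← pow_succ']
  have hw : ‖tdW γ P r l‖ ≤ (1 + γ ^ l) * ‖v‖ := by
    calc ‖tdW γ P r l‖ = ‖v - (v - tdW γ P r l)‖ := by rw [sub_sub_cancel]
      _ ≤ ‖v‖ + ‖v - tdW γ P r l‖ := norm_sub_le _ _
      _ ≤ ‖v‖ + γ ^ l * ‖v‖ := by
          rw [hdiff l]; exact add_le_add (le_refl _) (pow_mulVec_norm hP hγ0 v l)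
      _ = (1 + γ ^ l) * ‖v‖ := by ring
  refine ⟨?_, hw⟩
  have he : embed γ P r j (Atd n) 0 l (Sum.inr ()) (Sum.inr ()) = -(tdW γ P r l j) := by
    rw [embed_td]
    simp [Matrix.fromBlocks]
  rw [he, abs_neg]
  calc |tdW γ P r l j| ≤ ‖tdW γ P r l‖ := by
        simpa using norm_le_pi_norm (tdW γ P r l) j
    _ ≤ (1 + γ ^ l) * ‖v‖ := hw


end
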